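/- Let P be a symmetric positive definite n×n real matrix, W a symmetric positive definite m×m real matrix, A an m×n real matrix, and Π a symmetric n×n real matrix. Then the (n+m)×(n+m) block matrix [[P − Π, P Aᵀ], [A P, A P Aᵀ + W]] is positive semidefinite if and only if Π ⪯ (P⁻¹ + Aᵀ W⁻¹ A)⁻¹. -/

import Mathlib

open Matrix

/-- Schur-complement equivalence: the block matrix
`[[P − Π, P Aᵀ], [A P, A P Aᵀ + W]]` is positive semidefinite iff
`Π ⪯ (P⁻¹ + Aᵀ W⁻¹ A)⁻¹` in the Loewner order. (`Pi` plays the role of `Π`.) -/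
theorem stmt5 {n m : ℕ}
    (P : Matrix (Fin n) (Fin n) ℝ) (W : Matrix (Fin m) (Fin m) ℝ)
    (A : Matrix (Fin m) (Fin n) ℝ)
    (Pi : Matrix (Fin n) (Fin n) ℝ)
    (hP : P.PosDef) (hW : W.PosDef) (hPi : Pi.IsHermitian) :
    (Matrix.fromBlocks (P - Pi) (P * Aᵀ) (A * P) (A * P * Aᵀ + W)).PosSemidef ↔
      ((P⁻¹ + Aᵀ * W⁻¹ * A)⁻¹ - Pi).PosSemidef := by
  have hAPA : (A * P * Aᵀ).PosSemidef := by
    simpa using hP.posSemidef.mul_mul_conjTranspose_same A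
  have hM : (A * P * Aᵀ + W).PosDef := Matrix.PosDef.posSemidef_add hAPA hW
  have := hM.isUnit.invertible
  have hPT : Pᵀ = P := by
    rw [← conjTranspose_eq_transpose_of_trivial]; exact hP.isHermitian.eq
  have hBH : (P * Aᵀ)ᴴ = A * P := by
    rw [conjTranspose_eq_transpose_of_trivial, transpose_mul, transpose_transpose, hPT]
  have hS : (P⁻¹ + Aᵀ * W⁻¹ * A).PosDef := by
    refine hP.inv.add_posSemidef ?_
    simpa [conjTranspose_eq_transpose_of_trivial] using hW.posSemidef.inv.conjTranspose_mul_mul_same A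
  -- Woodbury identity
  have hWinv : W⁻¹ * W = 1 := nonsing_inv_mul _ hW.det_pos.ne'.isUnit
  have hMinv : (A * P * Aᵀ + W) * (A * P * Aᵀ + W)⁻¹ = 1 :=
    mul_nonsing_inv _ hM.det_pos.ne'.isUnit
  have hPinv : P⁻¹ * P = 1 := nonsing_inv_mul _ hP.det_pos.ne'.isUnit
  have key : (P⁻¹ + Aᵀ * W⁻¹ * A) *
      (P - P * Aᵀ * (A * P * Aᵀ + W)⁻¹ * (A * P)) = 1 := by
    have h1 : Aᵀ * ((A * P * Aᵀ + W)⁻¹ * (A * P))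
        = Aᵀ * (W⁻¹ * (W * ((A * P * Aᵀ + W)⁻¹ * (A * P)))) := by
      rw [← Matrix.mul_assoc W⁻¹ W, hWinv, Matrix.one_mul]
    have h2 : A * P * Aᵀ * ((A * P * Aᵀ + W)⁻¹ * (A * P))
        + W * ((A * P * Aᵀ + W)⁻¹ * (A * P)) = A * P := by
      rw [← Matrix.add_mul, ← Matrix.mul_assoc, hMinv, Matrix.one_mul]
    calc (P⁻¹ + Aᵀ * W⁻¹ * A) * (P - P * Aᵀ * (A * P * Aᵀ + W)⁻¹ * (A * P))
        = P⁻¹ * P + Aᵀ * W⁻¹ * (A * P)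
          - (P⁻¹ * P * (Aᵀ * ((A * P * Aᵀ + W)⁻¹ * (A * P)))
            + Aᵀ * W⁻¹ * (A * P * Aᵀ * ((A * P * Aᵀ + W)⁻¹ * (A * P)))) := by
          simp only [Matrix.mul_sub, Matrix.add_mul, Matrix.mul_assoc]
      _ = 1 := by
          rw [hPinv, Matrix.one_mul, h1]
          have h3 : Aᵀ * (W⁻¹ * (W * ((A * P * Aᵀ + W)⁻¹ * (A * P))))
              + Aᵀ * W⁻¹ * (A * P * Aᵀ * ((A * P * Aᵀ + W)⁻¹ * (A * P)))
              = Aᵀ * W⁻¹ * (A * P) := by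
            calc Aᵀ * (W⁻¹ * (W * ((A * P * Aᵀ + W)⁻¹ * (A * P))))
                + Aᵀ * W⁻¹ * (A * P * Aᵀ * ((A * P * Aᵀ + W)⁻¹ * (A * P)))
                = Aᵀ * W⁻¹ * (A * P * Aᵀ * ((A * P * Aᵀ + W)⁻¹ * (A * P))
                  + W * ((A * P * Aᵀ + W)⁻¹ * (A * P))) := by
                  simp only [Matrix.mul_add, Matrix.mul_assoc]; abel
              _ = Aᵀ * W⁻¹ * (A * P) := by rw [h2]
          rw [h3, add_sub_cancel_right]
  have hWood : (P⁻¹ + Aᵀ * W⁻¹ * A)⁻¹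
      = P - P * Aᵀ * (A * P * Aᵀ + W)⁻¹ * (A * P) :=
    inv_eq_right_inv key
  have hiff := PosDef.fromBlocks₂₂ (P - Pi) (P * Aᵀ) hM
  rw [hBH] at hiff
  rw [hiff, hWood,
    show P - Pi - P * Aᵀ * (A * P * Aᵀ + W)⁻¹ * (A * P)
      = P - P * Aᵀ * (A * P * Aᵀ + W)⁻¹ * (A * P) - Pi from by abel]
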